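/- For N = 2^n, f(i,k) equals the number of pairs (a,b) with 0 ≤ a < i ≤ b < N, b - a = 2^(k-1), and a, b differing only in bit k of their binary representations (i.e., b = a + 2^(k-1) with bit k-1 of a equal to 0). In other words, f(i,k) counts the dimension-k hypercube edges crossing the cut between positions i-1 and i in the linear order 0, 1, ..., N-1. -/

import Mathlib

/-- Number of dimension-`k` links crossing intercolumn position `i`
(least nonnegative residue mod `2^k`). -/
def f (i : ℤ) (k : ℕ) : ℤ := (i * (1 - 2 * (((i - 1) / 2 ^ (k - 1)) % 2))) % 2 ^ k

/-- Total wire density at intercolumn position `i` for `N = 2^n`. -/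
def S (i : ℤ) (n : ℕ) : ℤ := ∑ k ∈ Finset.Icc 1 n, f i k

/-- The `j`-th binary digit of `i`, counting from 1 at the right. -/
def b (i : ℤ) (j : ℕ) : ℤ := (i / 2 ^ (j - 1)) % 2

/-- Excess of 1's over 0's among bit positions `j+1, ..., n` of `i`. -/
def e (i : ℤ) (j n : ℕ) : ℤ := ∑ l ∈ Finset.Icc (j + 1) n, (2 * b i l - 1)

/-- Maximum wire density `m(N)` for `N = 2^n`. -/
def m (n : ℕ) : ℤ := (4 * 2 ^ n - (-1) ^ n - 3) / 6

/-- Leftmost maximizing position `p(N)` for `N = 2^n`. -/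
def p (n : ℕ) : ℤ := (2 ^ n - (-1) ^ n) / 3


private lemma emod_eq_of_eq_add {M q x y : ℤ} (h : x = M * q + y) (h0 : 0 ≤ y) (h1 : y < M) :
    x % M = y := by
  subst h
  rw [add_comm, Int.add_mul_emod_self_left, Int.emod_eq_of_lt h0 h1]

private lemma div_emod_two (a w : ℤ) (hw : 0 < w) : (a / w) % 2 = 0 ↔ a % (2 * w) < w := by
  have hw' : w ≠ 0 := hw.ne'
  have hr0 : 0 ≤ a % w := Int.emod_nonneg a hw'
  have hr1 : a % w < w := Int.emod_lt_of_pos a hw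
  have hq : (a / w) % 2 = 0 ∨ (a / w) % 2 = 1 := Int.emod_two_eq_zero_or_one _
  have key : a % (2 * w) = w * ((a / w) % 2) + a % w := by
    apply emod_eq_of_eq_add (q := (a / w) / 2)
    · linear_combination -Int.mul_ediv_add_emod a w - w * Int.mul_ediv_add_emod (a / w) 2
    · rcases hq with h | h <;> rw [h] <;> linarith
    · rcases hq with h | h <;> rw [h] <;> linarith
  rcases hq with h | h <;> rw [h] at key <;> rw [h] <;> simp <;> linarith

theorem f_counts_crossing_edges (n : ℕ) (hn : 1 ≤ n) (k : ℕ) (hk1 : 1 ≤ k) (hkn : k ≤ n)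
    (i : ℤ) (hi0 : 0 ≤ i) (hiN : i ≤ 2 ^ n) :
    f i k = ((Finset.Ico (0 : ℤ) (2 ^ n) ×ˢ Finset.Ico (0 : ℤ) (2 ^ n)).filter
      (fun ab => ab.1 < i ∧ i ≤ ab.2 ∧ ab.2 = ab.1 + 2 ^ (k - 1) ∧
        (ab.1 / 2 ^ (k - 1)) % 2 = 0)).card := by
  set w : ℤ := 2 ^ (k - 1) with hw_def
  have hw : 0 < w := by positivity
  have hW : (2 : ℤ) ^ k = 2 * w := by
    rw [hw_def, ← pow_succ']
    congr 1
    omega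
  rcases eq_or_lt_of_le hi0 with h0 | h0
  · have hempty : ((Finset.Ico (0 : ℤ) (2 ^ n) ×ˢ Finset.Ico (0 : ℤ) (2 ^ n)).filter
        (fun ab => ab.1 < i ∧ i ≤ ab.2 ∧ ab.2 = ab.1 + w ∧
          (ab.1 / w) % 2 = 0)) = ∅ := by
      apply Finset.filter_eq_empty_iff.mpr
      intro ab hab
      simp only [Finset.mem_product, Finset.mem_Ico] at hab
      intro h
      omega
    rw [hempty, ← h0]
    simp [f]
  have hi1 : 1 ≤ i := h0
  obtain ⟨r, c, hr0, hr2, hce, hc0, hcdvd⟩ :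
      ∃ r c : ℤ, 0 ≤ r ∧ r < 2 * w ∧ c + r = i - 1 ∧ 0 ≤ c ∧ 2 * w ∣ c := by
    refine ⟨(i - 1) % (2 * w), 2 * w * ((i - 1) / (2 * w)),
      Int.emod_nonneg _ (by positivity), Int.emod_lt_of_pos _ (by positivity),
      Int.mul_ediv_add_emod (i - 1) (2 * w), mul_nonneg (by positivity)
        (Int.ediv_nonneg (by omega) (by positivity)), Dvd.intro _ rfl⟩
  set lo := max (i - w) c with hlo_def
  set hi' := min i (c + w) with hhi_def
  have hf : f i k = hi' - lo := by
    obtain ⟨t, hct⟩ := hcdvd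
    have hdivmod : (i - 1) / w % 2 = r / w % 2 := by
      rw [show i - 1 = r + w * (2 * t) by rw [hct] at hce; linarith,
        Int.add_mul_ediv_left _ _ hw.ne', Int.add_mul_emod_self_left]
    show (i * (1 - 2 * ((i - 1) / w % 2))) % 2 ^ k = hi' - lo
    rw [hW, hdivmod]
    rcases lt_or_ge r w with hrw | hrw
    · have hq0 : r / w = 0 := Int.ediv_eq_zero_of_lt hr0 hrw
      rw [hq0, show (i * (1 - 2 * ((0 : ℤ) % 2))) = i by norm_num]
      have hval : i % (2 * w) = r + 1 :=
        emod_eq_of_eq_add (q := t) (by rw [hct] at hce; linarith) (by linarith) (by linarith)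
      rw [hval, hlo_def, hhi_def,
        max_eq_right (by linarith), min_eq_left (by linarith)]
      linarith
    · have hq1 : r / w = 1 := by
        rw [show r = (r - w) + w * 1 by ring, Int.add_mul_ediv_left _ _ hw.ne',
          Int.ediv_eq_zero_of_lt (by linarith) (by linarith)]
        norm_num
      rw [hq1, show (i * (1 - 2 * ((1 : ℤ) % 2))) = -i by norm_num]
      have hval : (-i) % (2 * w) = 2 * w - r - 1 :=
        emod_eq_of_eq_add (q := -(t + 1)) (by rw [hct] at hce; linarith)
          (by linarith) (by linarith)
      rw [hval, hlo_def, hhi_def,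
        max_eq_left (by linarith), min_eq_right (by linarith)]
      linarith
  have hfnn : 0 ≤ f i k := by
    unfold f
    exact Int.emod_nonneg _ (by positivity)
  have hle : lo ≤ hi' := by linarith [hf, hfnn]
  have hcemod : ∀ a : ℤ, (a - c) % (2 * w) = a % (2 * w) := by
    intro a
    obtain ⟨t, hct⟩ := hcdvd
    rw [show a - c = a + 2 * w * (-t) by rw [hct]; ring, Int.add_mul_emod_self_left]
  have hcard : ((Finset.Ico (0 : ℤ) (2 ^ n) ×ˢ Finset.Ico (0 : ℤ) (2 ^ n)).filter
      (fun ab => ab.1 < i ∧ i ≤ ab.2 ∧ ab.2 = ab.1 + w ∧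
        (ab.1 / w) % 2 = 0)).card = (Finset.Ico lo hi').card := by
    apply Finset.card_nbij' (fun ab => ab.1) (fun a => (a, a + w))
    · intro ab hab
      simp only [Finset.mem_coe, Finset.mem_filter, Finset.mem_product, Finset.mem_Ico] at hab
      obtain ⟨⟨⟨ha0, haN⟩, hb0, hbN⟩, hai, hib, hbe, hbit⟩ := hab
      have hmod : ab.1 % (2 * w) < w := (div_emod_two ab.1 w hw).mp hbit
      have haim : i - w ≤ ab.1 := by rw [hbe] at hib; linarith
      have hkey := hcemod ab.1
      simp only [Finset.mem_coe, Finset.mem_Ico, hlo_def, hhi_def, max_le_iff, lt_min_iff]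
      rcases le_or_gt c ab.1 with hca | hca
      · have h1 : (ab.1 - c) % (2 * w) = ab.1 - c := by
          apply Int.emod_eq_of_lt <;> linarith
        exact ⟨⟨haim, hca⟩, hai, by linarith [h1.symm.trans hkey]⟩
      · exfalso
        have h1 : (ab.1 - c) % (2 * w) = ab.1 - c + 2 * w := by
          have h2 : (ab.1 - c + 2 * w * 1) % (2 * w) = (ab.1 - c) % (2 * w) :=
            Int.add_mul_emod_self_left (ab.1 - c) (2 * w) 1
          rw [mul_one] at h2
          rw [← h2]
          apply Int.emod_eq_of_lt <;> linarith
        linarith [h1.symm.trans hkey]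
    · intro a ha
      simp only [Finset.mem_coe, Finset.mem_Ico, hlo_def, hhi_def, max_le_iff, lt_min_iff] at ha
      obtain ⟨⟨haiw, hac⟩, hai, hacw⟩ := ha
      have ha0 : 0 ≤ a := le_trans hc0 hac
      have hmod : a % (2 * w) = a - c := by
        rw [← hcemod a]
        apply Int.emod_eq_of_lt <;> linarith
      have hWdvd : (2 * w) ∣ (2 : ℤ) ^ n := by
        rw [← hW]
        exact pow_dvd_pow 2 hkn
      have hcW : c + 2 * w ≤ 2 ^ n := by
        have hdvd2 : (2 * w) ∣ ((2 : ℤ) ^ n - c) := dvd_sub hWdvd hcdvd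
        have hpos : 0 < (2 : ℤ) ^ n - c := by linarith
        linarith [Int.le_of_dvd hpos hdvd2]
      rw [Finset.mem_coe, Finset.mem_filter, Finset.mem_product, Finset.mem_Ico, Finset.mem_Ico]
      exact ⟨⟨⟨ha0, show a < (2:ℤ) ^ n by linarith⟩, show (0:ℤ) ≤ a + w by linarith,
        show a + w < (2:ℤ) ^ n by linarith⟩, hai, show i ≤ a + w by linarith, rfl,
        (div_emod_two a w hw).mpr (by linarith)⟩
    · intro ab hab
      simp only [Finset.mem_coe, Finset.mem_filter, Finset.mem_product, Finset.mem_Ico] at hab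
      obtain ⟨_, _, _, hbe, _⟩ := hab
      exact Prod.ext rfl hbe.symm
    · intro a ha
      rfl
  rw [hf, hcard, Int.card_Ico, Int.toNat_of_nonneg (by linarith)]
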